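/- Let (λ, ρ, s) be a homothetic datum on a ring R, let Φ be a ring automorphism of R and v ∈ R, and set s' = Φ(s + v + v² − ρ(v) − λ(v)), λ'(a) = Φ(λ(Φ⁻¹(a)) − v·Φ⁻¹(a)), ρ'(a) = Φ(ρ(Φ⁻¹(a)) − Φ⁻¹(a)·v). Then the map Θ : R × ℤ → R × ℤ, (a, k) ↦ (Φ(a) + k•Φ(v), k), is a ring isomorphism from the homothetic extension R(σ,s) to the homothetic extension R(σ',s'). -/
import Mathlib


/-- The homothetic extension product on `R × ℤ`. -/
def homotheticMul {R : Type*} [NonUnitalRing R] (lam rho : R →+ R) (s : R)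
    (p q : R × ℤ) : R × ℤ :=
  (p.1 * q.1 + q.2 • rho p.1 + p.2 • lam q.1 + (p.2 * q.2) • s, p.2 * q.2)

/-- The transformed left operator `λ'(a) = Φ(λ(Φ⁻¹(a)) − v·Φ⁻¹(a))`. -/
def conjLam {R : Type*} [NonUnitalRing R] (Φ : R ≃+* R) (lam : R →+ R) (v : R) :
    R → R := fun a => Φ (lam (Φ.symm a) - v * Φ.symm a)

/-- The transformed right operator `ρ'(a) = Φ(ρ(Φ⁻¹(a)) − Φ⁻¹(a)·v)`. -/
def conjRho {R : Type*} [NonUnitalRing R] (Φ : R ≃+* R) (rho : R →+ R) (v : R) :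
    R → R := fun a => Φ (rho (Φ.symm a) - Φ.symm a * v)

/-- The transformed element `s' = Φ(s + v + v² − ρ(v) − λ(v))`. -/
def conjS {R : Type*} [NonUnitalRing R] (Φ : R ≃+* R) (lam rho : R →+ R)
    (s v : R) : R := Φ (s + v + v * v - rho v - lam v)

/-- Given a homothetic datum `(λ, ρ, s)` on `R`, a ring automorphism `Φ` of `R`
and `v ∈ R`, with `(λ', ρ', s')` the transformed homothetic datum, the map
`Θ : (a,k) ↦ (Φ(a) + k•Φ(v), k)` is a ring isomorphism from `R(σ,s)` to
`R(σ',s')`. -/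
theorem homothetic_extensions_equivalent {R : Type*} [NonUnitalRing R]
    (lam rho : R →+ R) (s : R)
    (hlam : ∀ a b : R, lam (a * b) = lam a * b)
    (hrho : ∀ a b : R, rho (a * b) = a * rho b)
    (hmid : ∀ a b : R, a * lam b = rho a * b)
    (hperm : ∀ a : R, rho (lam a) = lam (rho a))
    (hs : lam s = rho s)
    (hll : ∀ a : R, lam (lam a) = lam a + s * a)
    (hrr : ∀ a : R, rho (rho a) = rho a + a * s)
    (Φ : R ≃+* R) (v : R)
    (lam' rho' : R →+ R) (s' : R)
    (hl' : ∀ a : R, lam' a = conjLam Φ lam v a)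
    (hr' : ∀ a : R, rho' a = conjRho Φ rho v a)
    (hs'def : s' = conjS Φ lam rho s v) :
    (Function.Bijective (fun p : R × ℤ => ((Φ p.1 + p.2 • Φ v, p.2) : R × ℤ))) ∧
    (∀ x y : R × ℤ,
      ((Φ (x + y).1 + (x + y).2 • Φ v, (x + y).2) : R × ℤ)
        = (Φ x.1 + x.2 • Φ v, x.2) + (Φ y.1 + y.2 • Φ v, y.2)) ∧
    (∀ x y : R × ℤ,
      ((Φ (homotheticMul lam rho s x y).1
          + (homotheticMul lam rho s x y).2 • Φ v,
          (homotheticMul lam rho s x y).2) : R × ℤ)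
        = homotheticMul lam' rho' s'
            (Φ x.1 + x.2 • Φ v, x.2) (Φ y.1 + y.2 • Φ v, y.2)) := by
  refine ⟨?_, ?_, ?_⟩
  · refine Function.bijective_iff_has_inverse.2 ⟨fun p => (Φ.symm p.1 - p.2 • v, p.2), ?_, ?_⟩
    · rintro ⟨a, k⟩
      simp [smul_sub]
    · rintro ⟨a, k⟩
      simp [smul_sub, map_zsmul]
  · rintro ⟨a, k⟩ ⟨b, l⟩
    simp [Prod.ext_iff, add_smul]
    abel
  · rintro ⟨a, k⟩ ⟨b, l⟩
    simp only [homotheticMul, hl', hr', hs'def, conjLam, conjRho, conjS, Prod.ext_iff,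
      map_add, map_mul, map_zsmul, map_sub, Φ.symm_apply_apply, smul_add, smul_sub,
      mul_add, add_mul, smul_mul_assoc, mul_smul_comm, smul_smul]
    constructor
    · abel_nf
      ring_nf
      abel
    · trivial
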